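/- Suppose f: X → Y is an η-quasi-Möbius map between metric spaces. Then there exists a function Φ: ℝ⁺ → ℝ⁺ with Φ(t) → ∞ as t → ∞, depending only on η, such that for all disjoint continua E, F ⊂ X, one has Δ(f(E), f(F)) ≥ Φ(Δ(E,F)). -/

import Mathlib

/-- The cross-ratio of four points in a metric space. -/
noncomputable def crossRatio {Z : Type*} [MetricSpace Z] (z1 z2 z3 z4 : Z) : ℝ :=
  (dist z1 z3 * dist z2 z4) / (dist z1 z4 * dist z2 z3)

/-- A control function: a homeomorphism `η : [0,∞) → [0,∞)` with `η(0) = 0`. -/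
def ControlFunction (η : ℝ → ℝ) : Prop :=
  η 0 = 0 ∧ StrictMonoOn η (Set.Ici 0) ∧ ContinuousOn η (Set.Ici 0) ∧
    Set.SurjOn η (Set.Ici 0) (Set.Ici 0)

/-- `f` is `η`-quasi-Möbius: `f` is injective and
`[f(x₁),f(x₂),f(x₃),f(x₄)] ≤ η([x₁,x₂,x₃,x₄])` for all four-tuples of distinct points. -/
def IsQuasiMobiusWith {X Y : Type*} [MetricSpace X] [MetricSpace Y]
    (η : ℝ → ℝ) (f : X → Y) : Prop :=
  Function.Injective f ∧
  ∀ x1 x2 x3 x4 : X, x1 ≠ x2 → x1 ≠ x3 → x1 ≠ x4 → x2 ≠ x3 → x2 ≠ x4 → x3 ≠ x4 →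
    crossRatio (f x1) (f x2) (f x3) (f x4) ≤ η (crossRatio x1 x2 x3 x4)

/-- `f` is `η`-quasisymmetric: `f` is injective and
`d(f x₁, f x₂)/d(f x₁, f x₃) ≤ η(d(x₁,x₂)/d(x₁,x₃))` for all triples of distinct points. -/
def IsQuasisymmetricWith {X Y : Type*} [MetricSpace X] [MetricSpace Y]
    (η : ℝ → ℝ) (f : X → Y) : Prop :=
  Function.Injective f ∧
  ∀ x1 x2 x3 : X, x1 ≠ x2 → x1 ≠ x3 → x2 ≠ x3 →
    dist (f x1) (f x2) / dist (f x1) (f x3) ≤ η (dist x1 x2 / dist x1 x3)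

/-- A continuum: a compact connected set with more than one point. -/
def IsContinuum {Z : Type*} [MetricSpace Z] (E : Set Z) : Prop :=
  IsCompact E ∧ IsConnected E ∧ E.Nontrivial

/-- The distance between two subsets of a metric space. -/
noncomputable def setDist {Z : Type*} [MetricSpace Z] (E F : Set Z) : ℝ :=
  sInf (Set.image2 dist E F)

/-- The relative distance `Δ(E,F) = dist(E,F)/min(diam E, diam F)`. -/
noncomputable def relDelta {Z : Type*} [MetricSpace Z] (E F : Set Z) : ℝ :=
  setDist E F / min (Metric.diam E) (Metric.diam F)

section Helpers
open Set Metric Filter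

lemma setDist_nonneg {Z : Type*} [MetricSpace Z] (E F : Set Z) : 0 ≤ setDist E F :=
  Real.sInf_nonneg (by rintro x ⟨a, _, b, _, rfl⟩; exact dist_nonneg)

lemma setDist_le {Z : Type*} [MetricSpace Z] {E F : Set Z} {x y : Z}
    (hx : x ∈ E) (hy : y ∈ F) : setDist E F ≤ dist x y :=
  csInf_le ⟨0, by rintro z ⟨a, _, b, _, rfl⟩; exact dist_nonneg⟩ (Set.mem_image2_of_mem hx hy)

lemma setDist_comm {Z : Type*} [MetricSpace Z] (E F : Set Z) : setDist E F = setDist F E := by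
  unfold setDist
  rw [Set.image2_comm (g := dist) (fun a b => dist_comm a b)]

lemma setDist_pos {Z : Type*} [MetricSpace Z] {E F : Set Z} (hE : IsCompact E) (hF : IsCompact F)
    (hEne : E.Nonempty) (hFne : F.Nonempty) (hd : Disjoint E F) : 0 < setDist E F := by
  have hcomp : IsCompact (Set.image2 dist E F) := by
    rw [← Set.image_prod]
    exact (hE.prod hF).image (by fun_prop)
  have hne : (Set.image2 dist E F).Nonempty := Set.Nonempty.image2 hEne hFne
  have hmem := hcomp.sInf_mem hne
  obtain ⟨a, ha, b, hb, hab⟩ := hmem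
  rw [show setDist E F = dist a b from hab.symm] at *
  have : a ≠ b := fun h => (Set.disjoint_left.mp hd ha) (h ▸ hb)
  exact dist_pos.mpr this

lemma exists_setDist_lt {Z : Type*} [MetricSpace Z] {E F : Set Z}
    (hEne : E.Nonempty) (hFne : F.Nonempty) {ε : ℝ} (hε : 0 < ε) :
    ∃ x ∈ E, ∃ y ∈ F, dist x y < setDist E F + ε := by
  have hne : (Set.image2 dist E F).Nonempty := Set.Nonempty.image2 hEne hFne
  have hb : BddBelow (Set.image2 dist E F) :=
    ⟨0, by rintro z ⟨a, _, b, _, rfl⟩; exact dist_nonneg⟩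
  have : sInf (Set.image2 dist E F) < setDist E F + ε := by
    unfold setDist; linarith [le_refl (sInf (Set.image2 dist E F))]
  obtain ⟨z, hz, hzlt⟩ := (csInf_lt_iff hb hne).mp this
  obtain ⟨a, ha, b, hb', rfl⟩ := hz
  exact ⟨a, ha, b, hb', hzlt⟩

lemma crossRatio_nonneg {Z : Type*} [MetricSpace Z] (z1 z2 z3 z4 : Z) :
    0 ≤ crossRatio z1 z2 z3 z4 := by
  unfold crossRatio
  positivity

lemma bounded_image {X Y : Type*} [MetricSpace X] [MetricSpace Y] {η : ℝ → ℝ} {f : X → Y}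
    (hη : ControlFunction η) (hf : IsQuasiMobiusWith η f) {E F : Set X}
    (hEc : IsCompact E) (hEne : E.Nonempty) (hFnt : F.Nontrivial)
    (hd : Disjoint E F) (hs : ∀ x ∈ E, ∀ y ∈ F, (0:ℝ) < dist x y) :
    Bornology.IsBounded (f '' E) := by
  obtain ⟨e0, he0⟩ := hEne
  by_contra hb
  have hstep : ∀ n : ℕ, ∃ x, x ∈ E ∧ (n:ℝ) < dist (f e0) (f x) := by
    intro n
    by_contra h'
    push_neg at h'
    apply hb
    apply Bornology.IsBounded.subset (Metric.isBounded_closedBall (x := f e0) (r := n))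
    rintro y ⟨x, hx, rfl⟩
    exact Metric.mem_closedBall.mpr (by rw [dist_comm]; exact h' x hx)
  choose u hu hu' using hstep
  obtain ⟨e, he, φ, hφ, hlim⟩ := hEc.tendsto_subseq hu
  obtain ⟨p, hp, q, hq, hpq⟩ := hFnt
  have hne_pe : p ≠ e := fun h => (Set.disjoint_right.mp hd hp) (h ▸ he)
  have hinj := hf.1
  have hdpos : ∀ {x y : X}, x ≠ y → 0 < dist (f x) (f y) :=
    fun hxy => dist_pos.mpr (fun h => hxy (hinj h))
  set c0 : ℝ := dist (f p) (f q) / (2 * dist (f p) (f e)) with hc0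
  have hc0pos : 0 < c0 := by
    apply div_pos (hdpos hpq)
    have := hdpos hne_pe
    linarith
  -- input cross ratio tends to zero
  have hEq : ∀ x ∈ E, ∀ y ∈ F, 0 < dist x y := by
    intro x hx y hy; have := hs x hx y hy; linarith
  have hdeq : 0 < dist e q := hEq e he q hq
  have hdpe : 0 < dist p e := dist_pos.mpr hne_pe
  have hcr_in : Tendsto (fun n => crossRatio (u (φ n)) p e q) atTop (nhds 0) := by
    have h1 : Tendsto (fun n => dist (u (φ n)) e) atTop (nhds 0) :=
      tendsto_iff_dist_tendsto_zero.mp hlim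
    have h2 : Tendsto (fun n => dist (u (φ n)) q) atTop (nhds (dist e q)) :=
      hlim.dist tendsto_const_nhds
    have h3 : Tendsto (fun n => dist (u (φ n)) e * dist p q /
        (dist (u (φ n)) q * dist p e)) atTop (nhds (0 * dist p q / (dist e q * dist p e))) := by
      exact ((h1.mul tendsto_const_nhds).div (h2.mul tendsto_const_nhds)
        (by positivity)).congr (fun n => rfl)
    simpa [crossRatio, zero_div] using h3
  have hηcr : Tendsto (fun n => η (crossRatio (u (φ n)) p e q)) atTop (nhds 0) := by
    have hcont : Tendsto η (nhdsWithin 0 (Set.Ici 0)) (nhds 0) := by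
      have := (hη.2.2.1 0 (Set.mem_Ici.mpr le_rfl))
      simpa [hη.1] using this.tendsto
    exact hcont.comp (tendsto_nhdsWithin_iff.mpr ⟨hcr_in,
      Filter.Eventually.of_forall (fun n => crossRatio_nonneg _ _ _ _)⟩)
  have hev1 : ∀ᶠ n : ℕ in atTop, η (crossRatio (u (φ n)) p e q) < c0 :=
    hηcr.eventually_lt_const hc0pos
  -- eventually the image point is far away
  have hev2 : ∀ᶠ n : ℕ in atTop,
      max (dist (f e) (f q)) 1 ≤ dist (f (u (φ n))) (f e) := by
    obtain ⟨N, hN⟩ := exists_nat_ge (dist (f e0) (f e) + max (dist (f e) (f q)) 1)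
    filter_upwards [eventually_ge_atTop N] with n hn
    have h1 : (n:ℝ) < dist (f e0) (f (u (φ n))) := by
      have := hu' (φ n)
      have hφn : (n:ℝ) ≤ (φ n : ℝ) := Nat.cast_le.mpr hφ.le_apply
      linarith
    have h2 : dist (f e0) (f (u (φ n))) ≤ dist (f e0) (f e) + dist (f e) (f (u (φ n))) :=
      dist_triangle _ _ _
    have hNn : (N:ℝ) ≤ (n:ℝ) := Nat.cast_le.mpr hn
    have h3 : dist (f (u (φ n))) (f e) = dist (f e) (f (u (φ n))) := dist_comm _ _
    linarith
  obtain ⟨n, hn1, hn2⟩ := (hev1.and hev2).exists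
  -- distinctness
  set x := u (φ n) with hx
  have hxE : x ∈ E := hu (φ n)
  have hxe : x ≠ e := by
    intro h
    rw [h] at hn2
    simp at hn2
    have : max (dist (f e) (f q)) 1 ≥ 1 := le_max_right _ _
    linarith
  have hxp : x ≠ p := fun h => (Set.disjoint_left.mp hd hxE) (h ▸ hp)
  have hxq : x ≠ q := fun h => (Set.disjoint_left.mp hd hxE) (h ▸ hq)
  have heq' : e ≠ q := fun h => (Set.disjoint_left.mp hd he) (h ▸ hq)
  have hkey := hf.2 x p e q hxp hxe hxq hne_pe hpq heq'
  -- lower bound on output cross ratio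
  have hd1 : 0 < dist (f x) (f e) := hdpos hxe
  have hd2 : 0 < dist (f x) (f q) := hdpos hxq
  have hd3 : 0 < dist (f p) (f e) := hdpos hne_pe
  have hd4 : 0 < dist (f p) (f q) := hdpos hpq
  have htri : dist (f x) (f q) ≤ 2 * dist (f x) (f e) := by
    have := dist_triangle (f x) (f e) (f q)
    have h5 : dist (f e) (f q) ≤ dist (f x) (f e) := le_trans (le_max_left _ _) hn2
    linarith
  have hlow : c0 ≤ crossRatio (f x) (f p) (f e) (f q) := by
    unfold crossRatio
    rw [hc0, div_le_div_iff₀ (by positivity) (by positivity)]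
    calc dist (f p) (f q) * (dist (f x) (f q) * dist (f p) (f e))
        ≤ dist (f p) (f q) * (2 * dist (f x) (f e) * dist (f p) (f e)) := by
          apply mul_le_mul_of_nonneg_left _ dist_nonneg
          exact mul_le_mul_of_nonneg_right htri dist_nonneg
      _ = dist (f x) (f e) * dist (f p) (f q) * (2 * dist (f p) (f e)) := by ring
  have := lt_of_le_of_lt (le_trans hlow hkey) hn1
  exact lt_irrefl _ this

lemma real_endgame {a b D k : ℝ} (ha : 0 < a) (hb : 0 < b) (hD : 0 < D) (hk : 0 < k)
    (hab : a ≤ b) (key2 : a * b ≤ 16 * k * D * (a + b + D)) :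
    (64 * max k (Real.sqrt k))⁻¹ ≤ D / a := by
  set K := max k (Real.sqrt k) with hK
  have hsk : 0 < Real.sqrt k := Real.sqrt_pos.mpr hk
  have hKpos : 0 < K := lt_of_lt_of_le hk (le_max_left _ _)
  have hgoal : a ≤ 64 * K * D → (64 * K)⁻¹ ≤ D / a := by
    intro h
    rw [inv_eq_one_div, div_le_div_iff₀ (by positivity) ha]
    nlinarith
  apply hgoal
  rcases le_or_gt D (2 * b) with hD2 | hD2
  · -- a ≤ 64 k D
    have h1 : a * b ≤ 64 * k * D * b := by
      nlinarith [mul_le_mul_of_nonneg_left (show a + b + D ≤ 4 * b by linarith)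
        (show (0:ℝ) ≤ 16 * k * D by positivity)]
    have h2 : a ≤ 64 * k * D := le_of_mul_le_mul_right (by linarith [h1]) hb
    have hkK : k ≤ K := le_max_left _ _
    nlinarith
  · have h1 : a ^ 2 ≤ 32 * k * D ^ 2 := by
      nlinarith [mul_le_mul_of_nonneg_left (show a + b + D ≤ 2 * D by linarith)
        (show (0:ℝ) ≤ 16 * k * D by positivity), mul_le_mul_of_nonneg_left hab ha.le]
    have h2 : a ≤ Real.sqrt (32 * k) * D := by
      have := Real.sqrt_le_sqrt h1
      rw [Real.sqrt_sq ha.le] at this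
      rwa [Real.sqrt_mul (by positivity) (D ^ 2), Real.sqrt_sq hD.le] at this
    have h3 : Real.sqrt (32 * k) ≤ 6 * Real.sqrt k := by
      rw [Real.sqrt_mul (by norm_num)]
      have h36 : Real.sqrt 32 ≤ 6 := by
        rw [show (6:ℝ) = Real.sqrt 36 by
          rw [show (36:ℝ) = 6 ^ 2 by norm_num, Real.sqrt_sq]; norm_num]
        exact Real.sqrt_le_sqrt (by norm_num)
      exact mul_le_mul_of_nonneg_right h36 (Real.sqrt_nonneg k)
    have hkK : Real.sqrt k ≤ K := le_max_right _ _
    nlinarith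

noncomputable def qmPhi (η : ℝ → ℝ) (t : ℝ) : ℝ :=
  (64 * max (η (2 * t⁻¹ + t⁻¹ ^ 2)) (Real.sqrt (η (2 * t⁻¹ + t⁻¹ ^ 2))))⁻¹

lemma eta_pos {η : ℝ → ℝ} (hη : ControlFunction η) {x : ℝ} (hx : 0 < x) : 0 < η x := by
  rw [← hη.1]
  exact hη.2.1 (Set.mem_Ici.mpr le_rfl) (Set.mem_Ici.mpr hx.le) hx

lemma qmPhi_pos {η : ℝ → ℝ} (hη : ControlFunction η) {t : ℝ} (ht : 0 < t) : 0 < qmPhi η t := by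
  unfold qmPhi
  have hψ : 0 < 2 * t⁻¹ + t⁻¹ ^ 2 := by positivity
  have hk : 0 < η (2 * t⁻¹ + t⁻¹ ^ 2) := eta_pos hη hψ
  have hm : 0 < max (η (2 * t⁻¹ + t⁻¹ ^ 2)) (Real.sqrt (η (2 * t⁻¹ + t⁻¹ ^ 2))) :=
    lt_of_lt_of_le hk (le_max_left _ _)
  positivity

lemma qmPhi_tendsto {η : ℝ → ℝ} (hη : ControlFunction η) :
    Filter.Tendsto (qmPhi η) Filter.atTop Filter.atTop := by
  have h0 : Tendsto (fun t : ℝ => t⁻¹) atTop (nhds 0) := tendsto_inv_atTop_zero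
  have hψt : Tendsto (fun t : ℝ => 2 * t⁻¹ + t⁻¹ ^ 2) atTop (nhds 0) := by
    have := (h0.const_mul 2).add (h0.pow 2)
    simpa using this
  have hψpos : ∀ᶠ t : ℝ in atTop, 0 < 2 * t⁻¹ + t⁻¹ ^ 2 := by
    filter_upwards [eventually_gt_atTop 0] with t ht
    have : 0 < t⁻¹ := by positivity
    positivity
  have hk : Tendsto (fun t : ℝ => η (2 * t⁻¹ + t⁻¹ ^ 2)) atTop (nhds 0) := by
    have hcont : Tendsto η (nhdsWithin 0 (Set.Ici 0)) (nhds 0) := by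
      have := (hη.2.2.1 0 (Set.mem_Ici.mpr le_rfl)).tendsto
      rwa [hη.1] at this
    exact hcont.comp (tendsto_nhdsWithin_iff.mpr
      ⟨hψt, hψpos.mono fun t ht => Set.mem_Ici.mpr ht.le⟩)
  have hsk : Tendsto (fun t : ℝ => Real.sqrt (η (2 * t⁻¹ + t⁻¹ ^ 2))) atTop (nhds 0) := by
    have := (Real.continuous_sqrt.tendsto 0).comp hk
    simpa [Function.comp_def] using this
  have hmax : Tendsto (fun t : ℝ => 64 * max (η (2 * t⁻¹ + t⁻¹ ^ 2))
      (Real.sqrt (η (2 * t⁻¹ + t⁻¹ ^ 2)))) atTop (nhds 0) := by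
    have := (hk.max hsk).const_mul (64 : ℝ)
    simpa using this
  have hposev : ∀ᶠ t : ℝ in atTop, 64 * max (η (2 * t⁻¹ + t⁻¹ ^ 2))
      (Real.sqrt (η (2 * t⁻¹ + t⁻¹ ^ 2))) ∈ Set.Ioi (0:ℝ) := by
    filter_upwards [hψpos] with t ht
    have hk' : 0 < η (2 * t⁻¹ + t⁻¹ ^ 2) := eta_pos hη ht
    have : 0 < max (η (2 * t⁻¹ + t⁻¹ ^ 2)) (Real.sqrt (η (2 * t⁻¹ + t⁻¹ ^ 2))) :=
      lt_of_lt_of_le hk' (le_max_left _ _)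
    exact Set.mem_Ioi.mpr (by positivity)
  exact Filter.Tendsto.inv_tendsto_nhdsGT_zero (tendsto_nhdsWithin_iff.mpr ⟨hmax, hposev⟩)

set_option maxHeartbeats 2000000 in
lemma main_ineq {X Y : Type*} [MetricSpace X] [MetricSpace Y] {η : ℝ → ℝ} {f : X → Y}
    (hη : ControlFunction η) (hf : IsQuasiMobiusWith η f) {E F : Set X}
    (hEc : IsCompact E) (hFc : IsCompact F) (hEnt : E.Nontrivial) (hFnt : F.Nontrivial)
    (hd : Disjoint E F) (hEF : Metric.diam E ≤ Metric.diam F) :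
    qmPhi η (relDelta E F) ≤ relDelta (f '' E) (f '' F) := by
  have hEne : E.Nonempty := hEnt.nonempty
  have hFne : F.Nonempty := hFnt.nonempty
  have hinj := hf.1
  have hdpos : ∀ {x y : X}, x ≠ y → 0 < dist (f x) (f y) :=
    fun hxy => dist_pos.mpr (fun h => hxy (hinj h))
  have hneEF : ∀ x ∈ E, ∀ y ∈ F, x ≠ y :=
    fun x hx y hy h => (Set.disjoint_left.mp hd hx) (h ▸ hy)
  have hs : 0 < setDist E F := setDist_pos hEc hFc hEne hFne hd
  set s : ℝ := setDist E F with hs_def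
  obtain ⟨w1, hw1, w2, hw2, hw12⟩ := id hEnt
  have hδ : 0 < Metric.diam E :=
    lt_of_lt_of_le (dist_pos.mpr hw12) (dist_le_diam_of_mem hEc.isBounded hw1 hw2)
  set δ : ℝ := Metric.diam E with hδ_def
  have ht_eq : relDelta E F = s / δ := by
    unfold relDelta
    rw [min_eq_left hEF]
  set t : ℝ := relDelta E F with ht_def
  have ht_pos : 0 < t := by rw [ht_eq]; positivity
  have htinv : t⁻¹ = δ / s := by rw [ht_eq, inv_div]
  set ψ : ℝ := 2 * t⁻¹ + t⁻¹ ^ 2 with hψ_def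
  have hψ_pos : 0 < ψ := by
    have : 0 < t⁻¹ := by positivity
    positivity
  set k : ℝ := η ψ with hk_def
  have hk : 0 < k := by
    rw [hk_def, ← hη.1]
    exact hη.2.1 (Set.mem_Ici.mpr le_rfl) (Set.mem_Ici.mpr hψ_pos.le) hψ_pos
  -- boundedness of images
  have hbE : Bornology.IsBounded (f '' E) :=
    bounded_image hη hf hEc hEne hFnt hd
      (fun x hx y hy => dist_pos.mpr (hneEF x hx y hy))
  have hbF : Bornology.IsBounded (f '' F) :=
    bounded_image hη hf hFc hFne hEnt hd.symm
      (fun x hx y hy => dist_pos.mpr (fun h => hneEF y hy x hx h.symm))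
  set a : ℝ := Metric.diam (f '' E) with ha_def
  set b : ℝ := Metric.diam (f '' F) with hb_def
  have ha : 0 < a :=
    lt_of_lt_of_le (hdpos hw12)
      (dist_le_diam_of_mem hbE (Set.mem_image_of_mem f hw1) (Set.mem_image_of_mem f hw2))
  have hb : 0 < b := by
    obtain ⟨v1, hv1, v2, hv2, hv12⟩ := hFnt
    exact lt_of_lt_of_le (hdpos hv12)
      (dist_le_diam_of_mem hbF (Set.mem_image_of_mem f hv1) (Set.mem_image_of_mem f hv2))
  set D : ℝ := setDist (f '' E) (f '' F) with hD_def
  have hD0 : 0 ≤ D := setDist_nonneg _ _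
  -- the key estimate, for every ε > 0
  have key : ∀ ε : ℝ, 0 < ε → a * b ≤ 16 * k * (D + ε) * (a + b + (D + ε)) := by
    intro ε hε
    obtain ⟨fp, hfp, fq, hfq, hpq_lt⟩ :=
      exists_setDist_lt (hEne.image f) (hFne.image f) hε
    obtain ⟨p, hp, rfl⟩ := hfp
    obtain ⟨q, hq, rfl⟩ := hfq
    -- a point of E whose image is far from f p
    have hx3 : ∃ x3 ∈ E, a / 4 ≤ dist (f p) (f x3) := by
      by_contra h'
      push_neg at h'
      have hdiam : Metric.diam (f '' E) ≤ a / 2 := by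
        apply Metric.diam_le_of_forall_dist_le (by positivity)
        rintro y1 ⟨u1, hu1, rfl⟩ y2 ⟨u2, hu2, rfl⟩
        have t1 := h' u1 hu1
        have t2 := h' u2 hu2
        have := dist_triangle (f u1) (f p) (f u2)
        rw [dist_comm (f u1) (f p)] at this
        linarith
      rw [← ha_def] at hdiam
      linarith
    obtain ⟨x3, hx3E, hx3d⟩ := hx3
    have hx2 : ∃ x2 ∈ F, b / 4 ≤ dist (f q) (f x2) := by
      by_contra h'
      push_neg at h'
      have hdiam : Metric.diam (f '' F) ≤ b / 2 := by
        apply Metric.diam_le_of_forall_dist_le (by positivity)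
        rintro y1 ⟨u1, hu1, rfl⟩ y2 ⟨u2, hu2, rfl⟩
        have t1 := h' u1 hu1
        have t2 := h' u2 hu2
        have := dist_triangle (f u1) (f q) (f u2)
        rw [dist_comm (f u1) (f q)] at this
        linarith
      rw [← hb_def] at hdiam
      linarith
    obtain ⟨x2, hx2F, hx2d⟩ := hx2
    -- distinctness
    have hpx3 : p ≠ x3 := by
      intro h
      have : dist (f p) (f x3) = 0 := by rw [h, dist_self]
      rw [this] at hx3d; linarith
    have hqx2 : q ≠ x2 := by
      intro h
      have : dist (f q) (f x2) = 0 := by rw [h, dist_self]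
      rw [this] at hx2d; linarith
    have hpx2 : p ≠ x2 := hneEF p hp x2 hx2F
    have hpq : p ≠ q := hneEF p hp q hq
    have hx2x3 : x2 ≠ x3 := fun h => hneEF x3 hx3E x2 hx2F h.symm
    have hx3q : x3 ≠ q := hneEF x3 hx3E q hq
    have hkey := hf.2 p x2 x3 q hpx2 hpx3 hpq hx2x3 hqx2.symm hx3q
    -- input cross-ratio bound
    have hcr_in : crossRatio p x2 x3 q ≤ ψ := by
      unfold crossRatio
      have d13le : dist p x3 ≤ δ := dist_le_diam_of_mem hEc.isBounded hp hx3E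
      have dpq_ge : s ≤ dist p q := setDist_le hp hq
      have d23_ge : s ≤ dist x2 x3 := by
        rw [dist_comm]; exact setDist_le hx3E hx2F
      have d24_le : dist x2 q ≤ dist x2 x3 + dist p x3 + dist p q := by
        have h1 := dist_triangle x2 x3 q
        have h2 := dist_triangle x3 p q
        rw [dist_comm x3 p] at h2
        linarith
      have hψeq : ψ = (2 * δ * s + δ ^ 2) / s ^ 2 := by
        rw [hψ_def, htinv]; field_simp
      have hdpq : 0 < dist p q := lt_of_lt_of_le hs dpq_ge
      have hd23 : 0 < dist x2 x3 := lt_of_lt_of_le hs d23_ge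
      rw [hψeq, div_le_div_iff₀ (mul_pos hdpq hd23) (pow_pos hs 2)]
      have e1 : dist p x3 * dist x2 q ≤ δ * (dist x2 x3 + dist p x3 + dist p q) :=
        mul_le_mul d13le d24_le dist_nonneg hδ.le
      have e2 : δ * dist x2 x3 * s * s ≤ δ * dist x2 x3 * s * dist p q :=
        mul_le_mul_of_nonneg_left dpq_ge (by positivity)
      have e3 : δ * dist p q * s * s ≤ δ * dist p q * s * dist x2 x3 :=
        mul_le_mul_of_nonneg_left d23_ge (by positivity)
      have e4 : dist p x3 * (s * s) ≤ δ * (dist p q * dist x2 x3) := by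
        have h5 : s * s ≤ dist p q * dist x2 x3 :=
          mul_le_mul dpq_ge d23_ge hs.le dist_nonneg
        exact mul_le_mul d13le h5 (by positivity) hδ.le
      nlinarith [e1, e2, e3, e4, mul_le_mul_of_nonneg_right e1 (sq_nonneg s),
        mul_le_mul_of_nonneg_left e4 hδ.le]
    have hmono : η (crossRatio p x2 x3 q) ≤ k := by
      rw [hk_def]
      exact hη.2.1.monotoneOn (Set.mem_Ici.mpr (crossRatio_nonneg _ _ _ _))
        (Set.mem_Ici.mpr hψ_pos.le) hcr_in
    have hout : crossRatio (f p) (f x2) (f x3) (f q) ≤ k := le_trans hkey hmono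
    have hA : a / 4 ≤ dist (f p) (f x3) := hx3d
    have hB : b / 4 ≤ dist (f x2) (f q) := by rw [dist_comm]; exact hx2d
    have hCpos : 0 < dist (f p) (f q) := hdpos hpq
    have hGpos : 0 < dist (f x2) (f x3) := hdpos hx2x3
    have hC : dist (f p) (f q) ≤ D + ε := hpq_lt.le
    have hG : dist (f x2) (f x3) ≤ a + b + (D + ε) := by
      have h1 := dist_triangle (f x2) (f q) (f x3)
      have h2 := dist_triangle (f q) (f p) (f x3)
      have h3 : dist (f x2) (f q) ≤ b :=
        dist_le_diam_of_mem hbF (Set.mem_image_of_mem f hx2F) (Set.mem_image_of_mem f hq)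
      have h4 : dist (f p) (f x3) ≤ a :=
        dist_le_diam_of_mem hbE (Set.mem_image_of_mem f hp) (Set.mem_image_of_mem f hx3E)
      rw [dist_comm (f q) (f p)] at h2
      linarith
    unfold crossRatio at hout
    have hABle : dist (f p) (f x3) * dist (f x2) (f q) ≤
        k * (dist (f p) (f q) * dist (f x2) (f x3)) :=
      (div_le_iff₀ (by positivity)).mp hout
    have hm1 : a / 4 * (b / 4) ≤ dist (f p) (f x3) * dist (f x2) (f q) :=
      mul_le_mul hA hB (by positivity) dist_nonneg
    have hm2 : dist (f p) (f q) * dist (f x2) (f x3) ≤ (D + ε) * (a + b + (D + ε)) :=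
      mul_le_mul hC hG hGpos.le (by positivity)
    have hm3 : k * (dist (f p) (f q) * dist (f x2) (f x3)) ≤
        k * ((D + ε) * (a + b + (D + ε))) :=
      mul_le_mul_of_nonneg_left hm2 hk.le
    nlinarith [hm1, hABle, hm3]
  -- pass to the limit ε → 0
  have key2 : a * b ≤ 16 * k * D * (a + b + D) := by
    have hcont : Filter.Tendsto (fun ε : ℝ => 16 * k * (D + ε) * (a + b + (D + ε)))
        (nhdsWithin 0 (Set.Ioi 0)) (nhds (16 * k * (D + 0) * (a + b + (D + 0)))) :=
      Filter.Tendsto.mono_left (Continuous.tendsto (by continuity) 0) nhdsWithin_le_nhds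
    rw [add_zero] at hcont
    refine ge_of_tendsto hcont ?_
    filter_upwards [self_mem_nhdsWithin] with ε hε
    exact key ε hε
  have hDpos : 0 < D := by
    rcases hD0.lt_or_eq with h | h
    · exact h
    · exfalso
      rw [← h] at key2
      nlinarith [mul_pos ha hb]
  have hgoal : relDelta (f '' E) (f '' F) = D / min a b := rfl
  rw [hgoal]
  show (64 * max k (Real.sqrt k))⁻¹ ≤ D / min a b
  rcases le_total a b with hab | hab
  · rw [min_eq_left hab]
    exact real_endgame ha hb hDpos hk hab key2
  · rw [min_eq_right hab]
    exact real_endgame hb ha hDpos hk hab (by nlinarith [key2])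

end Helpers

open Set Metric Filter

lemma relDelta_comm {Z : Type*} [MetricSpace Z] (E F : Set Z) :
    relDelta E F = relDelta F E := by
  unfold relDelta
  rw [setDist_comm, min_comm]

/-- If `f` is `η`-quasi-Möbius then there is `Φ : ℝ⁺ → ℝ⁺` with `Φ(t) → ∞` as `t → ∞`,
depending only on `η`, such that `Δ(f(E), f(F)) ≥ Φ(Δ(E,F))` for all disjoint continua. -/
theorem stmt_7 (η : ℝ → ℝ) (hη : ControlFunction η) :
    ∃ Φ : ℝ → ℝ, (∀ t > (0:ℝ), 0 < Φ t) ∧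
      Filter.Tendsto Φ Filter.atTop Filter.atTop ∧
      ∀ (X Y : Type) [MetricSpace X] [MetricSpace Y] (f : X → Y),
        IsQuasiMobiusWith η f →
        ∀ E F : Set X, IsContinuum E → IsContinuum F → Disjoint E F →
          Φ (relDelta E F) ≤ relDelta (f '' E) (f '' F) := by
  refine ⟨qmPhi η, fun t ht => qmPhi_pos hη ht, qmPhi_tendsto hη, ?_⟩
  intro X Y _ _ f hf E F hE hF hd
  rcases le_total (Metric.diam E) (Metric.diam F) with h | h
  · exact main_ineq hη hf hE.1 hF.1 hE.2.2 hF.2.2 hd h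
  · rw [relDelta_comm E F, relDelta_comm (f '' E) (f '' F)]
    exact main_ineq hη hf hF.1 hE.1 hF.2.2 hE.2.2 hd.symm h
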